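/- Let n ≥ 2 be an integer and let r be a real number with n·r > 1. Then there exists τ ∈ (0, 1/n) such that sin(πτ) = r·sin(nπτ). -/

import Mathlib

open Real

/-- Existence claim of Theorem 2 (case `N_p = N_d - 1`): if `n ≥ 2` and `n·r > 1`,
the equation `sin(πτ) = r·sin(nπτ)` has a solution `τ ∈ (0, 1/n)`. -/
theorem exists_sin_eq_mul_sin_of_one_lt_mul (n : ℕ) (hn : 2 ≤ n) (r : ℝ) (hr : 1 < n * r) :
    ∃ τ ∈ Set.Ioo (0 : ℝ) (1 / (n : ℝ)),
      Real.sin (π * τ) = r * Real.sin (n * π * τ) := by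
  have hn0 : (0 : ℝ) < n := by positivity
  have hnne : (n : ℝ) ≠ 0 := ne_of_gt hn0
  set f : ℝ → ℝ := fun τ => Real.sin (π * τ) - r * Real.sin (n * π * τ) with hf
  have hf0 : f 0 = 0 := by simp [hf]
  have hcont : Continuous f := by
    apply Continuous.sub
    · exact Real.continuous_sin.comp (continuous_const.mul continuous_id)
    · exact continuous_const.mul (Real.continuous_sin.comp (continuous_const.mul continuous_id))
  -- f (1/n) > 0
  have hfb : 0 < f (1 / n) := by
    have h1 : (n : ℝ) * π * (1 / n) = π := by field_simp
    have h2 : Real.sin ((n : ℝ) * π * (1 / n)) = 0 := by rw [h1]; exact Real.sin_pi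
    have h3 : 0 < Real.sin (π * (1 / n)) := by
      apply Real.sin_pos_of_pos_of_lt_pi
      · positivity
      · rw [mul_one_div]
        calc π / n ≤ π / 2 := by
              apply div_le_div_of_nonneg_left pi_pos.le (by norm_num)
              exact_mod_cast hn
          _ < π := by linarith [pi_pos]
    simp only [hf, h2]
    linarith
  -- derivative of f at 0 is π - r*(n*π) < 0
  have hd1 : HasDerivAt (fun τ : ℝ => Real.sin (π * τ)) (π) 0 := by
    have := (Real.hasDerivAt_sin (π * 0)).comp 0 ((hasDerivAt_id (0:ℝ)).const_mul π)
    simpa [Function.comp_def] using this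
  have hd2 : HasDerivAt (fun τ : ℝ => r * Real.sin ((n : ℝ) * π * τ)) (r * ((n : ℝ) * π)) 0 := by
    have h := ((Real.hasDerivAt_sin ((n : ℝ) * π * 0)).comp 0
      ((hasDerivAt_id (0:ℝ)).const_mul ((n : ℝ) * π))).const_mul r
    simpa using h
  have hd : HasDerivAt f (π - r * ((n : ℝ) * π)) 0 := hd1.sub hd2
  have hdneg : π - r * ((n : ℝ) * π) < 0 := by nlinarith [pi_pos]
  -- find τ₀ ∈ (0, 1/n) with f τ₀ < 0
  have hslope := hasDerivAt_iff_tendsto_slope.mp hd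
  have hev : ∀ᶠ x in nhdsWithin (0:ℝ) {(0:ℝ)}ᶜ, slope f 0 x < 0 :=
    hslope.eventually (Filter.Tendsto.eventually_lt_const hdneg Filter.tendsto_id)
  have hev2 : ∀ᶠ x in nhdsWithin (0:ℝ) (Set.Ioi 0), slope f 0 x < 0 :=
    by
    refine hev.filter_mono ?_
    exact nhdsWithin_mono _ (fun x hx => ne_of_gt hx)
  have hev3 : ∀ᶠ x in nhdsWithin (0:ℝ) (Set.Ioi 0), x < 1 / (n:ℝ) := by
    apply eventually_nhdsWithin_of_eventually_nhds
    exact Filter.Tendsto.eventually_lt_const (show (0:ℝ) < 1/(n:ℝ) by positivity) Filter.tendsto_id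
  have hev4 : ∀ᶠ x in nhdsWithin (0:ℝ) (Set.Ioi 0), 0 < x :=
    eventually_mem_nhdsWithin.mono (fun x hx => hx)
  obtain ⟨τ₀, ⟨hs, hlt⟩, hpos⟩ := ((hev2.and hev3).and hev4).exists
  have hfτ₀ : f τ₀ < 0 := by
    have h1 : slope f 0 τ₀ = τ₀⁻¹ * f τ₀ := by simp [slope, hf0]
    rw [h1] at hs
    have hinv : 0 < τ₀⁻¹ := inv_pos.mpr hpos
    by_contra hge
    push_neg at hge
    nlinarith [mul_nonneg hinv.le hge]
  -- IVT on [τ₀, 1/n]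
  have hmem : (0:ℝ) ∈ Set.Ioo (f τ₀) (f (1/n)) := ⟨hfτ₀, hfb⟩
  have hsub := intermediate_value_Ioo hlt.le (hcont.continuousOn)
  obtain ⟨c, hc, hfc⟩ := hsub hmem
  refine ⟨c, ⟨lt_trans hpos hc.1, hc.2⟩, ?_⟩
  have : Real.sin (π * c) - r * Real.sin (n * π * c) = 0 := hfc
  linarith
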